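/- arXiv:2305.05712 — 3 statements merged into one kernel-verified Lean document; each statement's English description precedes it below -/
import Mathlib

section
/- Let j ∈ ℂ be a primitive 3rd root of unity and let A = (1/√2)·[[1, 1], [-1, 1]] and B = [[j, 0], [0, j²]] in GL₂(ℂ). Then B² = A²BA⁻², det A = 1, and det B = 1; consequently the assignment a ↦ A, b ↦ B extends (uniquely) to a group homomorphism ρ₁ : Γ₀ → GL₂(ℂ) whose image lies in SL₂(ℂ). -/
open Matrix

/-- The single relator `b² · a² · b⁻¹ · a⁻²` of the presented group
`Γ₀ = ⟨a, b ∣ b² = a²ba⁻²⟩`, where `a` is letter `0` and `b` is letter `1`. -/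
def gammaRels : Set (FreeGroup (Fin 2)) :=
  {FreeGroup.of 1 ^ 2 * FreeGroup.of 0 ^ 2 * (FreeGroup.of 1)⁻¹ * ((FreeGroup.of 0)⁻¹) ^ 2}

/-- The group `Γ₀ = ⟨a, b ∣ b² = a²ba⁻²⟩`. -/
abbrev Gamma0 : Type := PresentedGroup gammaRels

/-- The matrix `A = (1/√2)·[[1, 1], [-1, 1]]`. -/
noncomputable def matA : Matrix (Fin 2) (Fin 2) ℂ :=
  (1 / (Real.sqrt 2 : ℂ)) • !![1, 1; -1, 1]

/-- The matrix `B = [[j, 0], [0, j²]]`. -/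
def matB (j : ℂ) : Matrix (Fin 2) (Fin 2) ℂ := !![j, 0; 0, j ^ 2]

theorem rho1_exists (j : ℂ) (hj : IsPrimitiveRoot j 3) :
    matB j ^ 2 = matA ^ 2 * matB j * matA⁻¹ ^ 2 ∧
    matA.det = 1 ∧ (matB j).det = 1 ∧
    (∃! ρ : Gamma0 →* GL (Fin 2) ℂ,
      (ρ (PresentedGroup.of 0) : Matrix (Fin 2) (Fin 2) ℂ) = matA ∧
      (ρ (PresentedGroup.of 1) : Matrix (Fin 2) (Fin 2) ℂ) = matB j) ∧
    (∀ ρ : Gamma0 →* GL (Fin 2) ℂ,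
      (ρ (PresentedGroup.of 0) : Matrix (Fin 2) (Fin 2) ℂ) = matA →
      (ρ (PresentedGroup.of 1) : Matrix (Fin 2) (Fin 2) ℂ) = matB j →
      ∀ γ : Gamma0, (ρ γ : Matrix (Fin 2) (Fin 2) ℂ).det = 1) := by
  have hs2 : (Real.sqrt 2 : ℂ) ^ 2 = 2 := by
    norm_cast
    rw [Real.sq_sqrt] <;> norm_num
  have hs0 : (Real.sqrt 2 : ℂ) ≠ 0 := by
    intro h
    rw [h] at hs2; norm_num at hs2
  have hj3 : j ^ 3 = 1 := hj.pow_eq_one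
  have h12 : (1 / (Real.sqrt 2 : ℂ)) * (1 / (Real.sqrt 2 : ℂ)) = 1/2 := by
    field_simp; linear_combination -hs2
  have detA : matA.det = 1 := by
    simp [matA, det_smul, det_fin_two_of]
    field_simp
    linear_combination -hs2
  have hA2 : matA ^ 2 = !![0, 1; -1, 0] := by
    rw [pow_two, matA, smul_mul_assoc, mul_smul_comm, smul_smul, h12]
    ext i k
    fin_cases i <;> fin_cases k <;>
      simp [Matrix.mul_fin_two] <;> ring
  -- the explicit inverse of `matA`
  obtain ⟨Ai, hAidef⟩ : ∃ M : Matrix (Fin 2) (Fin 2) ℂ,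
      M = (1 / (Real.sqrt 2 : ℂ)) • !![1, -1; 1, 1] := ⟨_, rfl⟩
  have hAiA : Ai * matA = 1 := by
    rw [matA, hAidef, smul_mul_assoc, mul_smul_comm, smul_smul, h12]
    ext i k
    fin_cases i <;> fin_cases k <;>
      simp [Matrix.mul_fin_two, Matrix.one_apply] <;> ring
  have hAAi : matA * Ai = 1 := by
    rw [matA, hAidef, smul_mul_assoc, mul_smul_comm, smul_smul, h12]
    ext i k
    fin_cases i <;> fin_cases k <;>
      simp [Matrix.mul_fin_two, Matrix.one_apply] <;> ring
  have hAinv : matA⁻¹ = Ai := Matrix.inv_eq_left_inv hAiA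
  have hAi2 : matA⁻¹ ^ 2 = !![0, -1; 1, 0] := by
    rw [pow_two, hAinv, hAidef, smul_mul_assoc, mul_smul_comm, smul_smul, h12]
    ext i k
    fin_cases i <;> fin_cases k <;>
      simp [Matrix.mul_fin_two] <;> ring
  obtain ⟨Bi, hBidef⟩ : ∃ M : Matrix (Fin 2) (Fin 2) ℂ, M = !![j ^ 2, 0; 0, j] := ⟨_, rfl⟩
  have hB2 : matB j ^ 2 = Bi := by
    rw [hBidef]
    rw [pow_two, matB]
    ext i k
    fin_cases i <;> fin_cases k <;> simp [Matrix.mul_fin_two]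
    all_goals first
      | ring1
      | linear_combination j * hj3
      | linear_combination -j * hj3
  -- the explicit inverse of `matB j`
  have hBiB : Bi * matB j = 1 := by
    rw [matB, hBidef]
    ext i k
    fin_cases i <;> fin_cases k <;> simp [Matrix.mul_fin_two, Matrix.one_apply]
    all_goals first
      | ring1
      | linear_combination hj3
      | linear_combination -hj3
  have hBBi : matB j * Bi = 1 := by
    rw [matB, hBidef]
    ext i k
    fin_cases i <;> fin_cases k <;> simp [Matrix.mul_fin_two, Matrix.one_apply]
    all_goals first
      | ring1
      | linear_combination hj3
      | linear_combination -hj3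
  have hrel : matB j ^ 2 = matA ^ 2 * matB j * matA⁻¹ ^ 2 := by
    rw [hB2, hBidef, hA2, hAi2, matB]
    ext i k
    fin_cases i <;> fin_cases k <;>
      simp [Matrix.mul_fin_two] <;> ring
  have detB : (matB j).det = 1 := by
    rw [matB, det_fin_two_of]
    linear_combination hj3
  refine ⟨hrel, detA, detB, ?_, ?_⟩
  · -- existence and uniqueness of ρ
    set uA : GL (Fin 2) ℂ := ⟨matA, Ai, hAAi, hAiA⟩ with huA
    set uB : GL (Fin 2) ℂ := ⟨matB j, Bi, hBBi, hBiB⟩ with huB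
    set f : Fin 2 → GL (Fin 2) ℂ := ![uA, uB] with hf
    have hrelU : ∀ r ∈ gammaRels, FreeGroup.lift f r = 1 := by
      intro r hr
      rw [gammaRels, Set.mem_singleton_iff] at hr
      subst hr
      simp only [_root_.map_mul, _root_.map_pow, _root_.map_inv, FreeGroup.lift_apply_of, hf]
      apply Units.ext
      have huAinv : ((![uA, uB] (0 : Fin 2))⁻¹ : GL (Fin 2) ℂ).1 = Ai := rfl
      have huBinv : ((![uA, uB] (1 : Fin 2))⁻¹ : GL (Fin 2) ℂ).1 = Bi := rfl
      simp only [Units.val_mul, Units.val_pow_eq_pow_val, huAinv, huBinv]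
      show matB j ^ 2 * matA ^ 2 * Bi * Ai ^ 2 = 1
      have hAi2' : Ai ^ 2 = !![0, -1; 1, 0] := by rw [← hAinv]; exact hAi2
      rw [hB2, hA2, hBidef, hAi2']
      ext i k
      fin_cases i <;> fin_cases k <;> simp [Matrix.mul_fin_two, Matrix.one_apply]
      all_goals first
        | ring1
        | linear_combination hj3
        | linear_combination -hj3
        | linear_combination j * hj3
        | linear_combination -j * hj3
    refine ⟨PresentedGroup.toGroup hrelU, ⟨?_, ?_⟩, ?_⟩
    · rw [PresentedGroup.toGroup.of]; rfl
    · rw [PresentedGroup.toGroup.of]; rfl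
    · rintro ρ ⟨h0, h1⟩
      refine MonoidHom.ext fun x => ?_
      refine PresentedGroup.toGroup.unique hrelU ρ ?_
      intro i
      fin_cases i
      · exact Units.ext h0
      · exact Units.ext h1
  · -- image has determinant one
    intro ρ h0 h1 γ
    set D : Gamma0 →* ℂˣ := (Matrix.GeneralLinearGroup.det).comp ρ with hD
    have hrel1 : ∀ r ∈ gammaRels, FreeGroup.lift (fun _ : Fin 2 => (1 : ℂˣ)) r = 1 := by
      intro r hr
      rw [gammaRels, Set.mem_singleton_iff] at hr
      subst hr
      simp only [_root_.map_mul, _root_.map_pow, _root_.map_inv, FreeGroup.lift_apply_of,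
        one_pow, one_mul, mul_one, inv_one]
    have hDof : ∀ i : Fin 2, D (PresentedGroup.of i) = 1 := by
      intro i
      fin_cases i
      · exact Units.ext (by simpa [hD, Matrix.GeneralLinearGroup.val_det_apply, h0] using detA)
      · exact Units.ext (by simpa [hD, Matrix.GeneralLinearGroup.val_det_apply, h1] using detB)
    have hDγ : D γ = 1 := by
      have e1 : D γ = PresentedGroup.toGroup hrel1 γ :=
        PresentedGroup.toGroup.unique hrel1 D hDof
      have e2 : (1 : Gamma0 →* ℂˣ) γ = PresentedGroup.toGroup hrel1 γ :=
        PresentedGroup.toGroup.unique hrel1 1 (fun _ => rfl)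
      simp only [MonoidHom.one_apply] at e2
      rw [e1, ← e2]
    have := congrArg (Units.val) hDγ
    simpa [hD, Matrix.GeneralLinearGroup.val_det_apply] using this
end

section
/- Let ρ₁ : Γ₀ → GL₂(ℂ) be the representation sending a to (1/√2)·[[1, 1], [-1, 1]] and b to [[j, 0], [0, j²]] for j a primitive 3rd root of unity. Then there is no matrix g ∈ GL₂(ℂ) such that all matrix entries of g·ρ₁(γ)·g⁻¹ are integral over ℤ for every γ ∈ Γ₀; i.e., ρ₁ is not conjugate to a representation with values in GL₂ of the ring of algebraic integers. -/
open Matrix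

lemma half_not_integral : ¬ IsIntegral ℤ ((1 : ℂ) / 2) := by
  intro h
  have h2 : ((1 : ℂ) / 2) = algebraMap ℚ ℂ (1 / 2) := by norm_num
  rw [h2, isIntegral_algebraMap_iff (algebraMap ℚ ℂ).injective] at h
  obtain ⟨n, hn⟩ := IsIntegrallyClosed.isIntegral_iff.mp h
  have : (n : ℚ) = 1 / 2 := hn
  have h3 : (2 * n : ℚ) = 1 := by rw [this]; ring
  have : (2 * n : ℤ) = 1 := by exact_mod_cast h3
  omega

/-- The representation `ρ₁` is not conjugate to a representation with all matrix entries
algebraic integers. -/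
theorem rho1_not_integral (j : ℂ) (hj : IsPrimitiveRoot j 3)
    (ρ : Gamma0 →* GL (Fin 2) ℂ)
    (ha : (ρ (PresentedGroup.of 0) : Matrix (Fin 2) (Fin 2) ℂ) = matA)
    (hb : (ρ (PresentedGroup.of 1) : Matrix (Fin 2) (Fin 2) ℂ) = matB j) :
    ¬ ∃ g : GL (Fin 2) ℂ, ∀ γ : Gamma0, ∀ i k : Fin 2,
      IsIntegral ℤ (((g * ρ γ * g⁻¹ : GL (Fin 2) ℂ) : Matrix (Fin 2) (Fin 2) ℂ) i k) := by
  rintro ⟨g, hg⟩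
  set γ : Gamma0 := PresentedGroup.of 0 * PresentedGroup.of 1 with hγ
  -- the trace of the conjugated matrix is an algebraic integer
  have htr : IsIntegral ℤ
      (Matrix.trace ((g * ρ γ * g⁻¹ : GL (Fin 2) ℂ) : Matrix (Fin 2) (Fin 2) ℂ)) := by
    rw [Matrix.trace_fin_two]
    exact (hg γ 0 0).add (hg γ 1 1)
  -- trace is conjugation invariant
  have hconj : Matrix.trace ((g * ρ γ * g⁻¹ : GL (Fin 2) ℂ) : Matrix (Fin 2) (Fin 2) ℂ)
      = Matrix.trace ((ρ γ : Matrix (Fin 2) (Fin 2) ℂ)) := by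
    have : ((g * ρ γ * g⁻¹ : GL (Fin 2) ℂ) : Matrix (Fin 2) (Fin 2) ℂ)
        = (g : Matrix (Fin 2) (Fin 2) ℂ) * (ρ γ : Matrix (Fin 2) (Fin 2) ℂ)
          * ((g⁻¹ : GL (Fin 2) ℂ) : Matrix (Fin 2) (Fin 2) ℂ) := by
      simp [Units.val_mul]
    rw [this, Matrix.trace_mul_comm, ← mul_assoc]
    have h1 : ((g⁻¹ : GL (Fin 2) ℂ) : Matrix (Fin 2) (Fin 2) ℂ)
        * (g : Matrix (Fin 2) (Fin 2) ℂ) = 1 := by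
      rw [← Units.val_mul, inv_mul_cancel, Units.val_one]
    rw [h1, one_mul]
  -- value of ρ γ
  have hval : (ρ γ : Matrix (Fin 2) (Fin 2) ℂ) = matA * matB j := by
    rw [hγ, MonoidHom.map_mul, Units.val_mul, ha, hb]
  have hs : (Real.sqrt 2 : ℂ) ≠ 0 := by
    norm_cast
    positivity
  have hj3 : j ^ 3 = 1 := hj.pow_eq_one
  have hjne : j ≠ 1 := hj.ne_one (by norm_num)
  have hjsum : j ^ 2 + j + 1 = 0 := by
    have hfac : (j - 1) * (j ^ 2 + j + 1) = 0 := by linear_combination hj3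
    rcases mul_eq_zero.mp hfac with h | h
    · exact absurd (sub_eq_zero.mp h) hjne
    · exact h
  -- compute the trace
  have htrval : Matrix.trace (matA * matB j) = -(1 / (Real.sqrt 2 : ℂ)) := by
    simp [matA, matB, Matrix.trace_fin_two, Matrix.mul_apply, Fin.sum_univ_two]
    field_simp
    linear_combination hjsum
  have hint : IsIntegral ℤ (-(1 / (Real.sqrt 2 : ℂ))) := by
    rwa [hconj, hval, htrval] at htr
  have hsq : (-(1 / (Real.sqrt 2 : ℂ))) ^ 2 = 1 / 2 := by
    have : (Real.sqrt 2 : ℂ) ^ 2 = 2 := by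
      norm_cast
      rw [Real.sq_sqrt] <;> norm_num
    rw [neg_sq, div_pow, one_pow, this]
  exact half_not_integral (hsq ▸ hint.pow 2)
end

section
/- Let ρ₁ : Γ₀ → GL₂(ℂ) be the representation sending a to (1/√2)·[[1, 1], [-1, 1]] and b to [[j, 0], [0, j²]] for j a primitive 3rd root of unity, and let V be the 3-dimensional complex vector space of trace-zero 2×2 complex matrices with Γ₀ acting by γ·M = ρ₁(γ)·M·ρ₁(γ)⁻¹ (the adjoint representation Ad ρ₁). Then the first group cohomology H¹(Γ₀, V) vanishes; i.e., ρ₁ is cohomologically rigid. -/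
open Matrix

set_option maxHeartbeats 1000000

set_option maxHeartbeats 1000000

/-- Conjugation by a unit matrix `u = c • P` with `Q * P = 1` is conjugation by `P`. -/
private lemma conj_coe (u : GL (Fin 2) ℂ) (P Q : Matrix (Fin 2) (Fin 2) ℂ) (c : ℂ)
    (hc : c ≠ 0) (hu : (u : Matrix (Fin 2) (Fin 2) ℂ) = c • P) (hQP : Q * P = 1)
    (M : Matrix (Fin 2) (Fin 2) ℂ) :
    (u : Matrix (Fin 2) (Fin 2) ℂ) * M * ((u⁻¹ : GL (Fin 2) ℂ) : Matrix (Fin 2) (Fin 2) ℂ)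
      = P * M * Q := by
  have hPQ : P * Q = 1 := mul_eq_one_comm.mp hQP
  have hinv : ((u⁻¹ : GL (Fin 2) ℂ) : Matrix (Fin 2) (Fin 2) ℂ) = c⁻¹ • Q := by
    apply Units.inv_eq_of_mul_eq_one_right
    rw [hu, smul_mul_assoc, mul_smul_comm, smul_smul, mul_inv_cancel₀ hc, one_smul, hPQ]
  rw [hu, hinv, smul_mul_assoc, smul_mul_assoc, mul_smul_comm, smul_smul,
    mul_inv_cancel₀ hc, one_smul]

/-- For `V` the `Γ₀`-module of trace-zero `2×2` complex matrices with action
`γ · M = ρ₁(γ) M ρ₁(γ)⁻¹` (the adjoint representation of `ρ₁`), the first group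
cohomology `H¹(Γ₀, V)` vanishes: `ρ₁` is cohomologically rigid. -/
theorem rho1_cohomologically_rigid (j : ℂ) (hj : IsPrimitiveRoot j 3)
    (ρ : Gamma0 →* GL (Fin 2) ℂ)
    (ha : (ρ (PresentedGroup.of 0) : Matrix (Fin 2) (Fin 2) ℂ) = matA)
    (hb : (ρ (PresentedGroup.of 1) : Matrix (Fin 2) (Fin 2) ℂ) = matB j)
    (sl2 : Submodule ℂ (Matrix (Fin 2) (Fin 2) ℂ))
    (hsl2 : ∀ M : Matrix (Fin 2) (Fin 2) ℂ, M ∈ sl2 ↔ Matrix.trace M = 0)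
    (τ : Representation ℂ Gamma0 sl2)
    (hτ : ∀ (γ : Gamma0) (M : sl2),
      ((τ γ M : Matrix (Fin 2) (Fin 2) ℂ))
        = (ρ γ : Matrix (Fin 2) (Fin 2) ℂ) * (M : Matrix (Fin 2) (Fin 2) ℂ) *
            (((ρ γ)⁻¹ : GL (Fin 2) ℂ) : Matrix (Fin 2) (Fin 2) ℂ)) :
    Subsingleton (groupCohomology.H1 (Rep.of τ)) := by
  classical
  -- scalar facts
  have hs : ((Real.sqrt 2 : ℝ) : ℂ) ^ 2 = 2 := by
    rw [← Complex.ofReal_pow, Real.sq_sqrt (by norm_num : (0:ℝ) ≤ 2)]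
    norm_num
  have hsne : ((Real.sqrt 2 : ℝ) : ℂ) ≠ 0 := by
    simp only [ne_eq, Complex.ofReal_eq_zero]
    positivity
  have hj3 : j ^ 3 = 1 := hj.pow_eq_one
  have hj1 : j ^ 2 + j + 1 = 0 := by
    have hne : j - 1 ≠ 0 := sub_ne_zero.mpr (hj.ne_one (by norm_num))
    have hmul : (j - 1) * (j ^ 2 + j + 1) = 0 := by linear_combination hj3
    rcases mul_eq_zero.mp hmul with h | h
    · exact absurd h hne
    · exact h
  -- generators and relator
  set a : Gamma0 := PresentedGroup.of 0 with ha'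
  set b : Gamma0 := PresentedGroup.of 1 with hb'
  have hrel : b ^ 2 * a ^ 2 * b⁻¹ * (a⁻¹) ^ 2 = 1 := by
    have h : PresentedGroup.mk gammaRels (FreeGroup.of 1 ^ 2 * FreeGroup.of 0 ^ 2 *
        (FreeGroup.of 1)⁻¹ * ((FreeGroup.of 0)⁻¹) ^ 2) = 1 := by
      apply (QuotientGroup.eq_one_iff _).2
      exact Subgroup.subset_normalClosure rfl
    simp only [_root_.map_mul, map_pow, map_inv] at h
    exact h
  have key : b * b = a * a * b * a⁻¹ * a⁻¹ := by
    have h2 : b ^ 2 = (b ^ 2 * a ^ 2 * b⁻¹ * (a⁻¹) ^ 2) * (a * a * b * a⁻¹ * a⁻¹) := by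
      group
    rw [hrel, one_mul] at h2
    rw [← h2, pow_two]
  have key2 : a * a * b * a⁻¹ = b * b * a := by rw [key]; group
  -- conjugation formulas
  have conjA : ∀ v : sl2, ((τ a v : Matrix (Fin 2) (Fin 2) ℂ))
      = !![1, 1; -1, 1] * (v : Matrix (Fin 2) (Fin 2) ℂ) * ((2:ℂ)⁻¹ • !![1, -1; 1, 1]) := by
    intro v
    rw [hτ]
    refine conj_coe _ _ _ (1 / ((Real.sqrt 2 : ℝ) : ℂ)) (by simp [hsne]) ?_ ?_ _
    · rw [ha]; rfl
    · ext i k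
      fin_cases i <;> fin_cases k <;>
        (try simp [Matrix.mul_apply, Fin.sum_univ_two, Matrix.one_apply]) <;>
        first
        | ring1
        | linear_combination hj3
        | linear_combination (-1:ℂ)*hj3
        | linear_combination j*hj3
        | linear_combination (-j)*hj3
        | linear_combination j^2*hj3
        | linear_combination (-(j^2))*hj3
        | linear_combination (2:ℂ)⁻¹*hj3
        | linear_combination (-(2:ℂ)⁻¹)*hj3
        | linear_combination (Real.sqrt 2 : ℂ)⁻¹*hj3
        | linear_combination (-(Real.sqrt 2 : ℂ)⁻¹)*hj3
        | linear_combination j*(Real.sqrt 2 : ℂ)⁻¹*hj3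
        | linear_combination (-(j*(Real.sqrt 2 : ℂ)⁻¹))*hj3
        | (field_simp; first | ring1 | linear_combination hs | linear_combination -hs | linear_combination hj3 | linear_combination (-1:ℂ)*hj3 | linear_combination j*hj3 | linear_combination (-j)*hj3)
  have conjB : ∀ v : sl2, ((τ b v : Matrix (Fin 2) (Fin 2) ℂ))
      = !![j, 0; 0, j^2] * (v : Matrix (Fin 2) (Fin 2) ℂ) * !![j^2, 0; 0, j] := by
    intro v
    rw [hτ]
    refine conj_coe _ _ _ 1 one_ne_zero ?_ ?_ _
    · rw [hb, one_smul]; rfl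
    · ext i k
      fin_cases i <;> fin_cases k <;>
        (try simp [Matrix.mul_apply, Fin.sum_univ_two, Matrix.one_apply]) <;>
        first
        | ring1
        | linear_combination hj3
        | linear_combination (-1:ℂ)*hj3
        | linear_combination j*hj3
        | linear_combination (-j)*hj3
        | linear_combination j^2*hj3
        | linear_combination (-(j^2))*hj3
        | linear_combination (2:ℂ)⁻¹*hj3
        | linear_combination (-(2:ℂ)⁻¹)*hj3
        | linear_combination (Real.sqrt 2 : ℂ)⁻¹*hj3
        | linear_combination (-(Real.sqrt 2 : ℂ)⁻¹)*hj3
        | linear_combination j*(Real.sqrt 2 : ℂ)⁻¹*hj3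
        | linear_combination (-(j*(Real.sqrt 2 : ℂ)⁻¹))*hj3
        | (field_simp; first | ring1 | linear_combination hs | linear_combination -hs | linear_combination hj3 | linear_combination (-1:ℂ)*hj3 | linear_combination j*hj3 | linear_combination (-j)*hj3)
  have conjBB : ∀ v : sl2, ((τ (b * b) v : Matrix (Fin 2) (Fin 2) ℂ))
      = !![j^2, 0; 0, j] * (v : Matrix (Fin 2) (Fin 2) ℂ) * !![j, 0; 0, j^2] := by
    intro v
    rw [hτ]
    refine conj_coe _ _ _ 1 one_ne_zero ?_ ?_ _
    · rw [_root_.map_mul, Units.val_mul, hb, one_smul]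
      ext i k
      fin_cases i <;> fin_cases k <;>
        (try simp [matB, Matrix.mul_apply, Fin.sum_univ_two]) <;>
        first
        | ring1
        | linear_combination hj3
        | linear_combination (-1:ℂ)*hj3
        | linear_combination j*hj3
        | linear_combination (-j)*hj3
        | linear_combination j^2*hj3
        | linear_combination (-(j^2))*hj3
        | linear_combination (2:ℂ)⁻¹*hj3
        | linear_combination (-(2:ℂ)⁻¹)*hj3
        | linear_combination (Real.sqrt 2 : ℂ)⁻¹*hj3
        | linear_combination (-(Real.sqrt 2 : ℂ)⁻¹)*hj3
        | linear_combination j*(Real.sqrt 2 : ℂ)⁻¹*hj3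
        | linear_combination (-(j*(Real.sqrt 2 : ℂ)⁻¹))*hj3
        | (field_simp; first | ring1 | linear_combination hs | linear_combination -hs | linear_combination hj3 | linear_combination (-1:ℂ)*hj3 | linear_combination j*hj3 | linear_combination (-j)*hj3)
    · ext i k
      fin_cases i <;> fin_cases k <;>
        (try simp [Matrix.mul_apply, Fin.sum_univ_two, Matrix.one_apply]) <;>
        first
        | ring1
        | linear_combination hj3
        | linear_combination (-1:ℂ)*hj3
        | linear_combination j*hj3
        | linear_combination (-j)*hj3
        | linear_combination j^2*hj3
        | linear_combination (-(j^2))*hj3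
        | linear_combination (2:ℂ)⁻¹*hj3
        | linear_combination (-(2:ℂ)⁻¹)*hj3
        | linear_combination (Real.sqrt 2 : ℂ)⁻¹*hj3
        | linear_combination (-(Real.sqrt 2 : ℂ)⁻¹)*hj3
        | linear_combination j*(Real.sqrt 2 : ℂ)⁻¹*hj3
        | linear_combination (-(j*(Real.sqrt 2 : ℂ)⁻¹))*hj3
        | (field_simp; first | ring1 | linear_combination hs | linear_combination -hs | linear_combination hj3 | linear_combination (-1:ℂ)*hj3 | linear_combination j*hj3 | linear_combination (-j)*hj3)
  have conjBBA : ∀ v : sl2, ((τ (b * b * a) v : Matrix (Fin 2) (Fin 2) ℂ))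
      = !![j^2, j^2; -j, j] * (v : Matrix (Fin 2) (Fin 2) ℂ) *
        ((2:ℂ)⁻¹ • !![j, -(j^2); j, j^2]) := by
    intro v
    rw [hτ]
    refine conj_coe _ _ _ (1 / ((Real.sqrt 2 : ℝ) : ℂ)) (by simp [hsne]) ?_ ?_ _
    · rw [_root_.map_mul, _root_.map_mul, Units.val_mul, Units.val_mul, ha, hb]
      ext i k
      fin_cases i <;> fin_cases k <;>
        (try simp [matA, matB, Matrix.mul_apply, Fin.sum_univ_two]) <;>
        first
        | ring1
        | linear_combination hj3
        | linear_combination (-1:ℂ)*hj3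
        | linear_combination j*hj3
        | linear_combination (-j)*hj3
        | linear_combination j^2*hj3
        | linear_combination (-(j^2))*hj3
        | linear_combination (2:ℂ)⁻¹*hj3
        | linear_combination (-(2:ℂ)⁻¹)*hj3
        | linear_combination (Real.sqrt 2 : ℂ)⁻¹*hj3
        | linear_combination (-(Real.sqrt 2 : ℂ)⁻¹)*hj3
        | linear_combination j*(Real.sqrt 2 : ℂ)⁻¹*hj3
        | linear_combination (-(j*(Real.sqrt 2 : ℂ)⁻¹))*hj3
        | (field_simp; first | ring1 | linear_combination hs | linear_combination -hs | linear_combination hj3 | linear_combination (-1:ℂ)*hj3 | linear_combination j*hj3 | linear_combination (-j)*hj3)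
    · ext i k
      fin_cases i <;> fin_cases k <;>
        (try simp [Matrix.mul_apply, Fin.sum_univ_two, Matrix.one_apply]) <;>
        first
        | ring1
        | linear_combination hj3
        | linear_combination (-1:ℂ)*hj3
        | linear_combination j*hj3
        | linear_combination (-j)*hj3
        | linear_combination j^2*hj3
        | linear_combination (-(j^2))*hj3
        | linear_combination (2:ℂ)⁻¹*hj3
        | linear_combination (-(2:ℂ)⁻¹)*hj3
        | linear_combination (Real.sqrt 2 : ℂ)⁻¹*hj3
        | linear_combination (-(Real.sqrt 2 : ℂ)⁻¹)*hj3
        | linear_combination j*(Real.sqrt 2 : ℂ)⁻¹*hj3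
        | linear_combination (-(j*(Real.sqrt 2 : ℂ)⁻¹))*hj3
        | (field_simp; first | ring1 | linear_combination hs | linear_combination -hs | linear_combination hj3 | linear_combination (-1:ℂ)*hj3 | linear_combination j*hj3 | linear_combination (-j)*hj3)
  have conjAA : ∀ v : sl2, ((τ (a * a) v : Matrix (Fin 2) (Fin 2) ℂ))
      = !![0, 1; -1, 0] * (v : Matrix (Fin 2) (Fin 2) ℂ) * !![0, -1; 1, 0] := by
    intro v
    rw [hτ]
    refine conj_coe _ _ _ 1 one_ne_zero ?_ ?_ _
    · rw [_root_.map_mul, Units.val_mul, ha, one_smul]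
      ext i k
      fin_cases i <;> fin_cases k <;>
        (try simp [matA, Matrix.mul_apply, Fin.sum_univ_two]) <;>
        first
        | ring1
        | linear_combination hj3
        | linear_combination (-1:ℂ)*hj3
        | linear_combination j*hj3
        | linear_combination (-j)*hj3
        | linear_combination j^2*hj3
        | linear_combination (-(j^2))*hj3
        | linear_combination (2:ℂ)⁻¹*hj3
        | linear_combination (-(2:ℂ)⁻¹)*hj3
        | linear_combination (Real.sqrt 2 : ℂ)⁻¹*hj3
        | linear_combination (-(Real.sqrt 2 : ℂ)⁻¹)*hj3
        | linear_combination j*(Real.sqrt 2 : ℂ)⁻¹*hj3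
        | linear_combination (-(j*(Real.sqrt 2 : ℂ)⁻¹))*hj3
        | (field_simp; first | ring1 | linear_combination hs | linear_combination -hs | linear_combination hj3 | linear_combination (-1:ℂ)*hj3 | linear_combination j*hj3 | linear_combination (-j)*hj3)
    · ext i k
      fin_cases i <;> fin_cases k <;>
        (try simp [Matrix.mul_apply, Fin.sum_univ_two, Matrix.one_apply]) <;>
        first
        | ring1
        | linear_combination hj3
        | linear_combination (-1:ℂ)*hj3
        | linear_combination j*hj3
        | linear_combination (-j)*hj3
        | linear_combination j^2*hj3
        | linear_combination (-(j^2))*hj3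
        | linear_combination (2:ℂ)⁻¹*hj3
        | linear_combination (-(2:ℂ)⁻¹)*hj3
        | linear_combination (Real.sqrt 2 : ℂ)⁻¹*hj3
        | linear_combination (-(Real.sqrt 2 : ℂ)⁻¹)*hj3
        | linear_combination j*(Real.sqrt 2 : ℂ)⁻¹*hj3
        | linear_combination (-(j*(Real.sqrt 2 : ℂ)⁻¹))*hj3
        | (field_simp; first | ring1 | linear_combination hs | linear_combination -hs | linear_combination hj3 | linear_combination (-1:ℂ)*hj3 | linear_combination j*hj3 | linear_combination (-j)*hj3)
  -- reduce to showing every cocycle is a coboundary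
  refine ⟨fun x y => ?_⟩
  suffices hH : ∀ z : groupCohomology.H1 (Rep.of τ), z = 0 by rw [hH x, hH y]
  intro z
  induction z using groupCohomology.H1_induction_on with
  | h f => ?_
  rw [groupCohomology.H1π_eq_zero_iff]
  -- the cocycle as a function into sl2
  let f' : Gamma0 → sl2 := fun g => f g
  have hc : ∀ g h : Gamma0, f' (g * h) = τ g (f' h) + f' g :=
    fun g h => ((groupCohomology.mem_cocycles₁_iff (A := Rep.of τ) f).1 f.2) g h
  have h1 : f' 1 = 0 := groupCohomology.cocycles₁_map_one f
  have hinv : ∀ g : Gamma0, f' g⁻¹ = - τ g⁻¹ (f' g) := by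
    intro g
    have h := hc g⁻¹ g
    rw [inv_mul_cancel, h1] at h
    exact eq_neg_of_add_eq_zero_left (by rw [add_comm] at h; exact h.symm)
  set X : sl2 := f' a with hX
  set Y : sl2 := f' b with hY
  -- the relator equation for the cocycle
  have e1 : f' (b * b) = τ b Y + Y := hc b b
  have hcomp : ∀ (g h : Gamma0) (v : sl2), τ g (τ h v) = τ (g * h) v := by
    intro g h v
    rw [_root_.map_mul]
    rfl
  have E : - τ (b * b) X + (- τ (b * b * a) X + (τ (a * a) Y + (τ a X + X)))
      = τ b Y + Y := by
    have h1' := hc (a * a * b * a⁻¹) a⁻¹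
    have h2' := hc (a * a * b) a⁻¹
    have h3' := hc (a * a) b
    have h4' := hc a a
    rw [← key] at h1'
    rw [h2', h3', h4', hinv a, e1] at h1'
    rw [map_neg, map_neg, hcomp, hcomp, ← key, key2] at h1'
    exact h1'.symm
  -- coerce to matrices
  have Em := congrArg (Subtype.val) E
  simp only [Submodule.coe_add, Submodule.coe_neg] at Em
  rw [conjBB X, conjBBA X, conjAA Y, conjA X, conjB Y] at Em
  have h00 := Matrix.ext_iff.mpr Em 0 0
  have h01 := Matrix.ext_iff.mpr Em 0 1
  have h10 := Matrix.ext_iff.mpr Em 1 0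
  have h11 := Matrix.ext_iff.mpr Em 1 1
  simp only [Matrix.add_apply, Matrix.neg_apply, Matrix.mul_apply, Matrix.smul_apply,
    Fin.sum_univ_two, smul_eq_mul, Matrix.of_apply, Matrix.cons_val_zero, Matrix.cons_val_one,
    Matrix.head_cons] at h00 h01 h10 h11
  -- trace conditions
  have tx : (X : Matrix (Fin 2) (Fin 2) ℂ) 0 0 + (X : Matrix (Fin 2) (Fin 2) ℂ) 1 1 = 0 := by
    have h := (hsl2 _).1 X.2
    rwa [Matrix.trace_fin_two] at h
  have ty : (Y : Matrix (Fin 2) (Fin 2) ℂ) 0 0 + (Y : Matrix (Fin 2) (Fin 2) ℂ) 1 1 = 0 := by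
    have h := (hsl2 _).1 Y.2
    rwa [Matrix.trace_fin_two] at h
  -- the three scalar consequences of the relator equation
  have F1 : (Y : Matrix (Fin 2) (Fin 2) ℂ) 0 0 = 0 := by
    linear_combination ((-2/3 : ℂ)) * h00 + ((-1/3 : ℂ)) * h11 +
      (((-2/3 : ℂ)*j + (2/3)) * ((Y : Matrix (Fin 2) (Fin 2) ℂ) 0 0) +
       ((-7/6 : ℂ)*j + (7/6)) * ((X : Matrix (Fin 2) (Fin 2) ℂ) 0 0) +
       ((-1/6 : ℂ)*j + (1/6)) * ((X : Matrix (Fin 2) (Fin 2) ℂ) 1 0) +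
       ((-1/6 : ℂ)*j + (1/6)) * ((X : Matrix (Fin 2) (Fin 2) ℂ) 0 1) +
       ((-5/6 : ℂ)*j + (5/6)) * ((X : Matrix (Fin 2) (Fin 2) ℂ) 1 1) +
       ((-1/3 : ℂ)*j + (1/3)) * ((Y : Matrix (Fin 2) (Fin 2) ℂ) 1 1)) * hj1
  have F2 : (X : Matrix (Fin 2) (Fin 2) ℂ) 1 0 = (X : Matrix (Fin 2) (Fin 2) ℂ) 0 1 := by
    linear_combination ((-1/6 : ℂ)*j + (-1/3)) * h01 + ((-1/6 : ℂ)*j + (1/6)) * h10 +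
      (((1/12 : ℂ)*j^3 + (1/12)*j^2 + (-5/12)*j + (7/12)) * ((X : Matrix (Fin 2) (Fin 2) ℂ) 1 0) +
       ((-1/4 : ℂ)*j^3 + (-1/4)*j^2 + (7/12)*j + (-5/12)) * ((X : Matrix (Fin 2) (Fin 2) ℂ) 0 1) +
       ((-1/6 : ℂ)*j + (-1/6)) * ((Y : Matrix (Fin 2) (Fin 2) ℂ) 0 1) +
       ((1/12 : ℂ)*j^3 + (1/12)*j^2 + (-1/12)*j + (-1/12)) * ((X : Matrix (Fin 2) (Fin 2) ℂ) 0 0) +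
       ((-1/12 : ℂ)*j^3 + (-1/12)*j^2 + (1/12)*j + (1/12)) * ((X : Matrix (Fin 2) (Fin 2) ℂ) 1 1) +
       ((-1/6 : ℂ)*j^3 + (1/3)*j^2 + (-1/6)*j + (-1/6)) * ((Y : Matrix (Fin 2) (Fin 2) ℂ) 1 0)) * hj1
  have G3 : (j - 1) * (Y : Matrix (Fin 2) (Fin 2) ℂ) 0 1 +
      (j^2 - 1) * (Y : Matrix (Fin 2) (Fin 2) ℂ) 1 0
      = 3 * ((X : Matrix (Fin 2) (Fin 2) ℂ) 0 0 - (X : Matrix (Fin 2) (Fin 2) ℂ) 0 1) := by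
    linear_combination ((3/4 : ℂ)*j + (3/2)) * h01 + ((-1/4 : ℂ)*j + (1/4)) * h10 +
      ((-3/2 : ℂ)) * tx +
      (((3/4 : ℂ)*j + (3/4)) * ((Y : Matrix (Fin 2) (Fin 2) ℂ) 0 1) +
       ((-1/4 : ℂ)*j^3 + (1/2)*j^2 + (-1/4)*j + (3/4)) * ((Y : Matrix (Fin 2) (Fin 2) ℂ) 1 0) +
       ((-3/8 : ℂ)*j^3 + (-3/8)*j^2 + (7/8)*j + (-5/8)) * ((X : Matrix (Fin 2) (Fin 2) ℂ) 0 0) +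
       ((9/8 : ℂ)*j^3 + (9/8)*j^2 + (-17/8)*j + (7/8)) * ((X : Matrix (Fin 2) (Fin 2) ℂ) 0 1) +
       ((-3/8 : ℂ)*j^3 + (-3/8)*j^2 + (3/8)*j + (3/8)) * ((X : Matrix (Fin 2) (Fin 2) ℂ) 1 0) +
       ((3/8 : ℂ)*j^3 + (3/8)*j^2 + (-7/8)*j + (5/8)) * ((X : Matrix (Fin 2) (Fin 2) ℂ) 1 1)) * hj1
  -- the coboundary element
  have hmem : !![-((X : Matrix (Fin 2) (Fin 2) ℂ) 0 0 + (X : Matrix (Fin 2) (Fin 2) ℂ) 0 1) / 2,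
      (j - 1) * (Y : Matrix (Fin 2) (Fin 2) ℂ) 0 1 / 3;
      (j^2 - 1) * (Y : Matrix (Fin 2) (Fin 2) ℂ) 1 0 / 3,
      ((X : Matrix (Fin 2) (Fin 2) ℂ) 0 0 + (X : Matrix (Fin 2) (Fin 2) ℂ) 0 1) / 2] ∈ sl2 := by
    rw [hsl2, Matrix.trace_fin_two_of]
    ring
  set m : sl2 := ⟨_, hmem⟩ with hm
  have hmval : (m : Matrix (Fin 2) (Fin 2) ℂ)
      = !![-((X : Matrix (Fin 2) (Fin 2) ℂ) 0 0 + (X : Matrix (Fin 2) (Fin 2) ℂ) 0 1) / 2,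
      (j - 1) * (Y : Matrix (Fin 2) (Fin 2) ℂ) 0 1 / 3;
      (j^2 - 1) * (Y : Matrix (Fin 2) (Fin 2) ℂ) 1 0 / 3,
      ((X : Matrix (Fin 2) (Fin 2) ℂ) 0 0 + (X : Matrix (Fin 2) (Fin 2) ℂ) 0 1) / 2] := rfl
  -- the coboundary of m agrees with f on the generators
  have hfa : f' a = τ a m - m := by
    apply Subtype.coe_injective
    show ((X : sl2) : Matrix (Fin 2) (Fin 2) ℂ) = ((τ a m - m : sl2) : Matrix (Fin 2) (Fin 2) ℂ)
    rw [AddSubgroupClass.coe_sub, conjA m, hmval]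
    apply Matrix.ext_iff.mp
    simp only [Fin.forall_fin_two, Matrix.sub_apply, Matrix.mul_apply, Matrix.smul_apply,
      Fin.sum_univ_two, smul_eq_mul, Matrix.of_apply, Matrix.cons_val_zero, Matrix.cons_val_one,
      Matrix.head_cons]
    refine ⟨⟨?_, ?_⟩, ?_, ?_⟩
    · linear_combination ((-1/6 : ℂ)) * G3
    · linear_combination ((1/6 : ℂ)) * G3
    · linear_combination F2 + ((1/6 : ℂ)) * G3
    · linear_combination ((1/6 : ℂ)) * G3 + tx
  have hfb : f' b = τ b m - m := by
    apply Subtype.coe_injective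
    show ((Y : sl2) : Matrix (Fin 2) (Fin 2) ℂ) = ((τ b m - m : sl2) : Matrix (Fin 2) (Fin 2) ℂ)
    rw [AddSubgroupClass.coe_sub, conjB m, hmval]
    apply Matrix.ext_iff.mp
    simp only [Fin.forall_fin_two, Matrix.sub_apply, Matrix.mul_apply, Matrix.smul_apply,
      Fin.sum_univ_two, smul_eq_mul, Matrix.of_apply, Matrix.cons_val_zero, Matrix.cons_val_one,
      Matrix.head_cons]
    refine ⟨⟨?_, ?_⟩, ?_, ?_⟩
    · linear_combination F1 + (((1/2 : ℂ)*j + (-1/2)) * ((X : Matrix (Fin 2) (Fin 2) ℂ) 0 0) +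
        ((1/2 : ℂ)*j + (-1/2)) * ((X : Matrix (Fin 2) (Fin 2) ℂ) 0 1)) * hj1
    · linear_combination (((-1/3 : ℂ)*j + (2/3)) * ((Y : Matrix (Fin 2) (Fin 2) ℂ) 0 1)) * hj1
    · linear_combination (((-1/3 : ℂ)*j^4 + (1/3)*j^3 + (1/3)*j^2 + (-2/3)*j + (2/3)) *
        ((Y : Matrix (Fin 2) (Fin 2) ℂ) 1 0)) * hj1
    · linear_combination ((-1 : ℂ)) * F1 + ty + (((-1/2 : ℂ)*j + (1/2)) *
        ((X : Matrix (Fin 2) (Fin 2) ℂ) 0 0) +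
        ((-1/2 : ℂ)*j + (1/2)) * ((X : Matrix (Fin 2) (Fin 2) ℂ) 0 1)) * hj1
  -- every element satisfies the coboundary identity
  let S : Subgroup Gamma0 :=
    { carrier := {γ : Gamma0 | f' γ = τ γ m - m}
      one_mem' := by
        simp only [Set.mem_setOf_eq, h1, _root_.map_one, Module.End.one_apply, sub_self]
      mul_mem' := by
        intro g h hg hh
        simp only [Set.mem_setOf_eq] at hg hh ⊢
        rw [hc g h, hg, hh, map_sub, hcomp]
        abel
      inv_mem' := by
        intro g hg
        simp only [Set.mem_setOf_eq] at hg ⊢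
        rw [hinv g, hg, map_sub, hcomp, inv_mul_cancel, _root_.map_one, Module.End.one_apply]
        abel }
  have hS : ∀ γ : Gamma0, f' γ = τ γ m - m := by
    intro γ
    refine PresentedGroup.generated_by gammaRels S ?_ γ
    intro i
    fin_cases i
    · exact hfa
    · exact hfb
  exact ⟨m, funext fun g => by rw [groupCohomology.d₀₁_hom_apply]; exact (hS g).symm⟩
end
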